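/- Let X be a real random variable with E[X] = 0, variance σ² = E[X²] > 0, and finite moment generating function E[e^{tX}] < ∞ for all t ∈ ℝ. For each n, let X₁, …, X_n be i.i.d. copies of X. Then for every sequence (α_n) of nonnegative reals with α_n/n → 0, there exists N such that for all n ≥ N: E[|Σ_{i=1}^{n} X_i|^{2α_n}] ≤ 4 · 2^{α_n} · Γ(2α_n + 1) · σ^{2α_n} · n^{α_n}, where Γ is the Gamma function. -/

import Mathlib

open MeasureTheory Filter

namespace Stmt11Aux

open Real Set

lemma exp_abs_le (x : ℝ) : exp |x| ≤ exp x + exp (-x) := by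
  rcases abs_cases x with ⟨h, _⟩ | ⟨h, _⟩
  · rw [h]; nlinarith [exp_pos (-x)]
  · rw [h]; nlinarith [exp_pos x]

lemma sq_le_four_cosh (x : ℝ) : x ^ 2 ≤ 4 * (exp x + exp (-x)) := by
  have h1 : 1 + |x| / 2 ≤ exp (|x| / 2) := by
    have := add_one_le_exp (|x| / 2); linarith
  have h2 : exp (|x| / 2) * exp (|x| / 2) = exp |x| := by
    rw [← exp_add]; ring_nf
  have h3 : x ^ 2 / 4 ≤ exp |x| := by
    nlinarith [abs_nonneg x, sq_abs x]
  have h4 := exp_abs_le x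
  linarith

lemma exp_quad_bound (u : ℝ) : exp u ≤ 1 + u + u ^ 2 / 2 * (exp u + exp (-u)) := by
  rcases le_total 0 u with hu | hu
  · have hder : ∀ v : ℝ, HasDerivAt (fun w : ℝ => w ^ 2 / 2 - 1 + (1 + w) * exp (-w))
        (v - v * exp (-v)) v := by
      intro v
      have h1 : HasDerivAt (fun w : ℝ => w ^ 2 / 2 - 1) v v := by
        have := ((hasDerivAt_pow 2 v).div_const 2).sub_const 1
        simpa using this
      have h2 : HasDerivAt (fun w : ℝ => exp (-w)) (-exp (-v)) v := by
        simpa using ((hasDerivAt_id v).neg.exp)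
      have h3 : HasDerivAt (fun w : ℝ => (1 + w) * exp (-w))
          (1 * exp (-v) + (1 + v) * -exp (-v)) v :=
        (((hasDerivAt_id v).const_add 1)).mul h2
      have h4 := h1.add h3
      exact h4.congr_deriv (by ring)
    have hmono : MonotoneOn (fun w : ℝ => w ^ 2 / 2 - 1 + (1 + w) * exp (-w)) (Ici (0:ℝ)) := by
      apply monotoneOn_of_deriv_nonneg (convex_Ici 0)
      · exact fun v _ => (hder v).continuousAt.continuousWithinAt
      · exact fun v _ => (hder v).differentiableAt.differentiableWithinAt
      · intro v hv
        rw [interior_Ici] at hv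
        rw [(hder v).deriv]
        have h1 : exp (-v) ≤ 1 := exp_le_one_iff.mpr (by simp [le_of_lt (mem_Ioi.mp hv)])
        nlinarith [le_of_lt (mem_Ioi.mp hv)]
    have h0 : (0:ℝ) ≤ u ^ 2 / 2 - 1 + (1 + u) * exp (-u) := by
      have := hmono (self_mem_Ici) (show u ∈ Ici (0:ℝ) from hu) hu
      simpa using this
    have hprod : exp (-u) * exp u = 1 := by rw [← exp_add]; simp
    nlinarith [exp_pos u, exp_pos (-u), mul_nonneg h0 (exp_pos u).le, sq_nonneg u]
  · have hder : ∀ v : ℝ, HasDerivAt (fun w : ℝ => 1 + w + w ^ 2 / 2 - exp w)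
        (1 + v - exp v) v := by
      intro v
      have h1 : HasDerivAt (fun w : ℝ => 1 + w + w ^ 2 / 2) (1 + v) v := by
        have h2 : HasDerivAt (fun w : ℝ => w ^ 2 / 2) v v := by
          have := (hasDerivAt_pow 2 v).div_const 2
          simpa using this
        exact (((hasDerivAt_id v).const_add 1).add h2)
      exact h1.sub (Real.hasDerivAt_exp v)
    have hanti : AntitoneOn (fun w : ℝ => 1 + w + w ^ 2 / 2 - exp w) (Iic (0:ℝ)) := by
      apply antitoneOn_of_deriv_nonpos (convex_Iic 0)
      · exact fun v _ => (hder v).continuousAt.continuousWithinAt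
      · exact fun v _ => (hder v).differentiableAt.differentiableWithinAt
      · intro v _
        rw [(hder v).deriv]
        have := add_one_le_exp v
        linarith
    have h0 : (0:ℝ) ≤ 1 + u + u ^ 2 / 2 - exp u := by
      have := hanti (show u ∈ Iic (0:ℝ) from hu) (self_mem_Iic) hu
      simpa using this
    have h1 : 1 ≤ exp u + exp (-u) := by
      have := one_le_exp (show (0:ℝ) ≤ -u by linarith)
      nlinarith [exp_pos u]
    nlinarith [sq_nonneg u]

lemma rpow_le_gamma_mul_exp {p x : ℝ} (hp : 0 ≤ p) (hx : 0 ≤ x) :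
    x ^ p ≤ Real.Gamma (p + 1) * exp x := by
  rcases eq_or_lt_of_le hp with hp0 | hp
  · rw [← hp0, rpow_zero, zero_add, Real.Gamma_one, one_mul]
    exact one_le_exp hx
  have hΓpos : 0 < Real.Gamma (p + 1) := Real.Gamma_pos_of_pos (by linarith)
  rcases eq_or_lt_of_le hx with hx0 | hx
  · rw [← hx0, zero_rpow hp.ne']
    positivity
  · have hΓ : Real.Gamma (p + 1) = ∫ t in Ioi (0:ℝ), exp (-t) * t ^ p := by
      rw [Real.Gamma_eq_integral (by linarith : (0:ℝ) < p + 1)]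
      simp
    have hint : IntegrableOn (fun t : ℝ => exp (-t) * t ^ p) (Ioi 0) := by
      have := Real.GammaIntegral_convergent (show (0:ℝ) < p + 1 by linarith)
      simpa using this
    have hintx : IntegrableOn (fun t : ℝ => exp (-t) * t ^ p) (Ioi x) :=
      hint.mono_set (Ioi_subset_Ioi hx.le)
    have hintc : IntegrableOn (fun t : ℝ => exp (-t) * x ^ p) (Ioi x) := by
      have h := exp_neg_integrableOn_Ioi x (zero_lt_one)
      simp only [neg_mul, one_mul] at h
      exact h.mul_const _
    have h1 : ∫ t in Ioi x, exp (-t) * x ^ p ≤ ∫ t in Ioi x, exp (-t) * t ^ p := by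
      apply setIntegral_mono_on hintc hintx measurableSet_Ioi
      intro t ht
      have hxt : x ^ p ≤ t ^ p := rpow_le_rpow hx.le (le_of_lt ht) hp.le
      nlinarith [exp_pos (-t)]
    have h2 : ∫ t in Ioi x, exp (-t) * t ^ p ≤ Real.Gamma (p + 1) := by
      rw [hΓ]
      apply setIntegral_mono_set hint
      · filter_upwards [ae_restrict_mem measurableSet_Ioi] with t ht
        have : (0:ℝ) < t := ht
        positivity
      · exact HasSubset.Subset.eventuallyLE (Ioi_subset_Ioi hx.le)
    have h3 : ∫ t in Ioi x, exp (-t) * x ^ p = exp (-x) * x ^ p := by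
      rw [integral_mul_const, integral_exp_neg_Ioi]
    have h4 : exp (-x) * x ^ p ≤ Real.Gamma (p + 1) := by
      rw [← h3]; exact le_trans h1 h2
    have h5 : exp (-x) * exp x = 1 := by rw [← exp_add]; simp
    nlinarith [rpow_pos_of_pos hx p, exp_pos x, exp_pos (-x),
      mul_le_mul_of_nonneg_right h4 (exp_pos x).le]

lemma rpow_le_two {a : ℝ} (ha : 0 < a) : (5 * exp 1 / (8 * a)) ^ a ≤ 2 := by
  set y := 5 * exp 1 / (8 * a) with hy
  have hypos : 0 < y := by positivity
  rw [rpow_def_of_pos hypos]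
  have hlog2 : (5:ℝ) / 8 ≤ Real.log 2 := by nlinarith [Real.log_two_gt_d9]
  have key : Real.log y * a ≤ Real.log 2 := by
    rcases le_or_gt (Real.log y) 0 with h | h
    · nlinarith
    · have h1 : Real.log y ≤ y / exp 1 := by
        have h2 := Real.log_le_sub_one_of_pos (show 0 < y / exp 1 by positivity)
        rw [Real.log_div hypos.ne' (exp_pos 1).ne', Real.log_exp] at h2
        linarith
      have h3 : y / exp 1 * a = 5 / 8 := by
        rw [hy]; field_simp
      nlinarith [exp_pos 1]
  calc exp (Real.log y * a) ≤ exp (Real.log 2) := exp_le_exp.mpr key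
    _ = 2 := Real.exp_log (by norm_num)

lemma integral_pi_prod {β : Type*} [MeasurableSpace β] (μ : Measure β) [SigmaFinite μ]
    (f : β → ℝ) (n : ℕ) :
    ∫ x : Fin n → β, ∏ i, f (x i) ∂(Measure.pi fun _ => μ) = (∫ x, f x ∂μ) ^ n := by
  letI : MeasureSpace β := ⟨μ⟩
  haveI : SigmaFinite (volume : Measure β) := ‹SigmaFinite μ›
  have h := MeasureTheory.integral_fintype_prod_eq_pow (𝕜 := ℝ) (ι := Fin n) f (μ := μ)
  simpa [MeasureTheory.volume_pi] using h

lemma integrable_pi_prod {β : Type*} [MeasurableSpace β] (μ : Measure β) [SigmaFinite μ]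
    {f : β → ℝ} (hf : Integrable f μ) (n : ℕ) :
    Integrable (fun x : Fin n → β => ∏ i, f (x i)) (Measure.pi fun _ => μ) := by
  letI : MeasureSpace β := ⟨μ⟩
  haveI : SigmaFinite (volume : Measure β) := ‹SigmaFinite μ›
  exact MeasureTheory.Integrable.fintype_prod (𝕜 := ℝ) (f := fun _ : Fin n => f) (fun _ => hf)

end Stmt11Aux

open Stmt11Aux Real in
set_option maxHeartbeats 1000000 in
/-- **Fractional moment bound for sums of i.i.d. centered variables with a
moment generating function.** If `X` has law `μ`, mean `0`, variance
`σ² = E[X²] > 0` and `E[e^{tX}] < ∞` for all `t`, then for any nonnegative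
sequence `α_n` with `α_n/n → 0`, eventually
`E[|∑_{i=1}^n X_i|^{2α_n}] ≤ 4 · 2^{α_n} · Γ(2α_n + 1) · σ^{2α_n} · n^{α_n}`. -/
theorem stmt11 (μ : Measure ℝ) [IsProbabilityMeasure μ]
    (hmean : ∫ x, x ∂μ = 0)
    (hvar : 0 < ∫ x, x ^ 2 ∂μ)
    (hmgf : ∀ t : ℝ, Integrable (fun x => Real.exp (t * x)) μ)
    (α : ℕ → ℝ) (hα : ∀ n, 0 ≤ α n)
    (hαn : Tendsto (fun n => α n / n) atTop (nhds 0)) :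
    ∃ N : ℕ, ∀ n ≥ N,
      ∫ x : Fin n → ℝ, |∑ i, x i| ^ (2 * α n) ∂(Measure.pi fun _ => μ)
        ≤ 4 * 2 ^ α n * Real.Gamma (2 * α n + 1)
            * (∫ x, x ^ 2 ∂μ) ^ α n * (n : ℝ) ^ α n := by
  classical
  set V := ∫ x, x ^ 2 ∂μ with hV
  have hVpos : 0 < V := hvar
  -- integrable dominating function
  have hbound_int : Integrable (fun x : ℝ => 8 * (exp (2 * x) + 2 + exp (-(2 * x)))) μ := by
    have h1 := hmgf 2
    have h2 := hmgf (-2)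
    have h3 : Integrable (fun _ : ℝ => (2:ℝ)) μ := integrable_const 2
    simp only [neg_mul] at h2
    exact ((h1.add h3).add h2).const_mul 8
  have hcosh_le : ∀ x : ℝ, (exp x + exp (-x)) * (exp x + exp (-x))
      ≤ exp (2 * x) + 2 + exp (-(2 * x)) := by
    intro x
    have e1 : exp (2 * x) = exp x * exp x := by rw [two_mul, exp_add]
    have e2 : exp (-(2 * x)) = exp (-x) * exp (-x) := by
      rw [show -(2*x) = -x + -x by ring, exp_add]
    have e3 : exp x * exp (-x) = 1 := by rw [← exp_add]; simp
    nlinarith [exp_pos x, exp_pos (-x)]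
  -- pointwise domination for |l| ≤ 1
  have hdom : ∀ l : ℝ, |l| ≤ 1 → ∀ x : ℝ,
      x ^ 2 * (exp (l * x) + exp (-(l * x))) ≤ 8 * (exp (2 * x) + 2 + exp (-(2 * x))) := by
    intro l hl x
    have hA : exp (l * x) ≤ exp x + exp (-x) := by
      have h1 : l * x ≤ |x| := by
        calc l * x ≤ |l * x| := le_abs_self _
          _ = |l| * |x| := abs_mul _ _
          _ ≤ 1 * |x| := mul_le_mul_of_nonneg_right hl (abs_nonneg x)
          _ = |x| := one_mul _
      calc exp (l * x) ≤ exp |x| := exp_le_exp.mpr h1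
        _ ≤ exp x + exp (-x) := Real.exp_abs_le x
    have hB : exp (-(l * x)) ≤ exp x + exp (-x) := by
      have h1 : -(l * x) ≤ |x| := by
        calc -(l * x) ≤ |l * x| := neg_le_abs _
          _ = |l| * |x| := abs_mul _ _
          _ ≤ 1 * |x| := mul_le_mul_of_nonneg_right hl (abs_nonneg x)
          _ = |x| := one_mul _
      calc exp (-(l * x)) ≤ exp |x| := exp_le_exp.mpr h1
        _ ≤ exp x + exp (-x) := Real.exp_abs_le x
    have hx2 := sq_le_four_cosh x
    have hc := hcosh_le x
    nlinarith [exp_pos x, exp_pos (-x), sq_nonneg x, exp_pos (l*x), exp_pos (-(l*x))]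
  have hGmeas : ∀ l : ℝ, Continuous (fun x : ℝ => x ^ 2 * (exp (l * x) + exp (-(l * x)))) := by
    intro l; fun_prop
  have hGint : ∀ l : ℝ, |l| ≤ 1 →
      Integrable (fun x : ℝ => x ^ 2 * (exp (l * x) + exp (-(l * x)))) μ := by
    intro l hl
    refine hbound_int.mono ((hGmeas l).aestronglyMeasurable) (ae_of_all _ fun x => ?_)
    rw [Real.norm_eq_abs, Real.norm_eq_abs, abs_of_nonneg (by positivity),
      abs_of_nonneg (by positivity)]
    exact hdom l hl x
  have hsqint : Integrable (fun x : ℝ => x ^ 2) μ := by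
    have h := hGint 0 (by simp)
    have e : (fun x : ℝ => x ^ 2 * (exp ((0:ℝ) * x) + exp (-((0:ℝ) * x)))) = fun x => 2 * x ^ 2 := by
      funext x
      simp only [zero_mul, Real.exp_zero, neg_zero]
      ring
    rw [e] at h
    exact (h.div_const 2).congr (ae_of_all _ fun x => by ring)
  have hXint : Integrable (fun x : ℝ => x) μ := by
    have hb : Integrable (fun x : ℝ => 1 + x ^ 2) μ := (integrable_const 1).add hsqint
    refine hb.mono (continuous_id.aestronglyMeasurable) (ae_of_all _ fun x => ?_)
    rw [Real.norm_eq_abs, Real.norm_eq_abs, abs_of_nonneg (by positivity : (0:ℝ) ≤ 1 + x ^ 2)]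
    nlinarith [sq_abs x, sq_nonneg (|x| - 1)]
  -- the function G and its continuity at 0
  set G : ℝ → ℝ := fun l => ∫ x, x ^ 2 * (exp (l * x) + exp (-(l * x))) ∂μ with hGdef
  have hGcont : ContinuousAt G 0 := by
    apply continuousAt_of_dominated
      (bound := fun x : ℝ => 8 * (exp (2 * x) + 2 + exp (-(2 * x))))
    · exact Eventually.of_forall fun l => (hGmeas l).aestronglyMeasurable
    · have h1 : ∀ᶠ l : ℝ in nhds 0, |l| ≤ 1 := by
        have h2 := Metric.closedBall_mem_nhds (0:ℝ) one_pos
        filter_upwards [h2] with l hl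
        simpa [Real.dist_eq] using hl
      filter_upwards [h1] with l hl
      refine ae_of_all _ fun x => ?_
      rw [Real.norm_eq_abs, abs_of_nonneg (by positivity)]
      exact hdom l hl x
    · exact hbound_int
    · exact ae_of_all _ fun x => by fun_prop
  have hG0 : G 0 = 2 * V := by
    have e : (fun x : ℝ => x ^ 2 * (exp ((0:ℝ) * x) + exp (-((0:ℝ) * x)))) = fun x => 2 * x ^ 2 := by
      funext x
      simp only [zero_mul, Real.exp_zero, neg_zero]
      ring
    have h0 : G 0 = ∫ x, x ^ 2 * (exp ((0:ℝ) * x) + exp (-((0:ℝ) * x))) ∂μ := rfl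
    rw [h0, e, integral_const_mul, hV]
  obtain ⟨δ, hδpos, hδle, hδ⟩ : ∃ δ : ℝ, 0 < δ ∧ δ ≤ 1 ∧ ∀ l, |l| ≤ δ → G l ≤ 5 / 2 * V := by
    have h2 : ∀ᶠ l in nhds (0:ℝ), G l < 5 / 2 * V := by
      apply hGcont.eventually_lt_const
      rw [hG0]; nlinarith
    rw [Metric.eventually_nhds_iff] at h2
    obtain ⟨ε, hε, h⟩ := h2
    refine ⟨min (ε / 2) 1, by positivity, min_le_right _ _, fun l hl => ?_⟩
    refine (h (show dist l 0 < ε from ?_)).le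
    rw [Real.dist_eq, sub_zero]
    calc |l| ≤ min (ε / 2) 1 := hl
      _ ≤ ε / 2 := min_le_left _ _
      _ < ε := by linarith
  set K := 5 / 4 * V with hK
  have hKpos : 0 < K := by rw [hK]; nlinarith
  -- the mgf bound
  have hmgfb : ∀ l : ℝ, |l| ≤ δ → (∫ x, exp (l * x) ∂μ) ≤ exp (K * l ^ 2) := by
    intro l hl
    have hl1 : |l| ≤ 1 := hl.trans hδle
    have hint3 := hGint l hl1
    have hintc1 : Integrable (fun _ : ℝ => (1:ℝ)) μ := integrable_const 1
    have hintlx : Integrable (fun x : ℝ => l * x) μ := hXint.const_mul l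
    have hintsum : Integrable (fun x : ℝ => 1 + l * x) μ := hintc1.add hintlx
    have step1 : (∫ x, exp (l * x) ∂μ)
        ≤ ∫ x, (1 + l * x + l ^ 2 / 2 * (x ^ 2 * (exp (l * x) + exp (-(l * x))))) ∂μ := by
      refine integral_mono (hmgf l) (hintsum.add (hint3.const_mul (l ^ 2 / 2))) (fun x => ?_)
      have h := exp_quad_bound (l * x)
      have he : (l * x) ^ 2 / 2 * (exp (l * x) + exp (-(l * x)))
          = l ^ 2 / 2 * (x ^ 2 * (exp (l * x) + exp (-(l * x)))) := by ring
      simp only []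
      linarith [he ▸ h]
    have step2 : ∫ x, (1 + l * x + l ^ 2 / 2 * (x ^ 2 * (exp (l * x) + exp (-(l * x))))) ∂μ
        = 1 + l ^ 2 / 2 * G l := by
      rw [integral_add hintsum (hint3.const_mul _), integral_add hintc1 hintlx,
        integral_const, integral_const_mul, integral_const_mul, hmean]
      simp
      exact Or.inl rfl
    have step3 : G l ≤ 5 / 2 * V := hδ l hl
    have step4 : 1 + l ^ 2 / 2 * G l ≤ 1 + K * l ^ 2 := by
      rw [hK]; nlinarith [sq_nonneg l]
    have step5 : 1 + K * l ^ 2 ≤ exp (K * l ^ 2) := by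
      linarith [add_one_le_exp (K * l ^ 2)]
    linarith [step1, step2.le, step2.ge]
  -- choose N
  have hev : ∀ᶠ n : ℕ in atTop, α n / n < K * δ ^ 2 :=
    hαn.eventually_lt_const (by positivity)
  obtain ⟨N0, hN0⟩ := eventually_atTop.mp hev
  refine ⟨max N0 1, fun n hn => ?_⟩
  have hn1 : 1 ≤ n := le_trans (le_max_right _ _) hn
  have hnα : α n / n < K * δ ^ 2 := hN0 n (le_trans (le_max_left _ _) hn)
  have hnR : (0:ℝ) < n := by exact_mod_cast hn1
  set a := α n with ha
  have ha0 : 0 ≤ a := hα n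
  haveI : IsProbabilityMeasure (Measure.pi fun _ : Fin n => μ) := by infer_instance
  rcases eq_or_lt_of_le ha0 with haz | hapos
  · rw [← haz]
    simp only [mul_zero, rpow_zero, zero_add, Real.Gamma_one, mul_one]
    rw [integral_const]
    simp
  -- main case
  set P := Measure.pi (fun _ : Fin n => μ) with hP
  set l := Real.sqrt (a / (K * n)) with hldef
  have hl2 : l ^ 2 = a / (K * n) := Real.sq_sqrt (by positivity)
  have hlpos : 0 < l := Real.sqrt_pos.mpr (by positivity)
  have hlδ : l ≤ δ := by
    have h1 : a / (K * n) ≤ δ ^ 2 := by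
      rw [show a / (K * n) = a / n / K by rw [div_div, mul_comm]]
      rw [div_le_iff₀ hKpos]
      nlinarith
    calc l = Real.sqrt (a / (K * n)) := hldef
      _ ≤ Real.sqrt (δ ^ 2) := Real.sqrt_le_sqrt h1
      _ = δ := by rw [Real.sqrt_sq hδpos.le]
  have hlδ' : |l| ≤ δ := by rwa [abs_of_pos hlpos]
  have hlδ'' : |(-l)| ≤ δ := by rwa [abs_neg, abs_of_pos hlpos]
  set Γ2 := Real.Gamma (2 * a + 1) with hΓ2
  have hΓpos : 0 < Γ2 := Real.Gamma_pos_of_pos (by linarith)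
  set c := Γ2 * l ^ (-(2 * a)) with hc
  have hcpos : 0 < c := mul_pos hΓpos (rpow_pos_of_pos hlpos _)
  -- pointwise bound
  have hpt : ∀ s : ℝ, |s| ^ (2 * a) ≤ c * (exp (l * s) + exp (-(l * s))) := by
    intro s
    have h1 : (l * |s|) ^ (2 * a) ≤ Γ2 * exp (l * |s|) := by
      rw [hΓ2]
      exact rpow_le_gamma_mul_exp (by linarith) (by positivity)
    have h2 : (l * |s|) ^ (2 * a) = l ^ (2 * a) * |s| ^ (2 * a) :=
      mul_rpow hlpos.le (abs_nonneg s)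
    have h3 : exp (l * |s|) ≤ exp (l * s) + exp (-(l * s)) := by
      have he : l * |s| = |l * s| := by rw [abs_mul, abs_of_pos hlpos]
      rw [he]; exact Real.exp_abs_le _
    have h4 : l ^ (-(2 * a)) * l ^ (2 * a) = 1 := by
      rw [← rpow_add hlpos]; simp
    calc |s| ^ (2 * a) = l ^ (-(2 * a)) * l ^ (2 * a) * |s| ^ (2 * a) := by
          rw [h4, one_mul]
      _ = l ^ (-(2 * a)) * (l * |s|) ^ (2 * a) := by rw [h2]; ring
      _ ≤ l ^ (-(2 * a)) * (Γ2 * exp (l * |s|)) :=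
          mul_le_mul_of_nonneg_left h1 (rpow_nonneg hlpos.le _)
      _ ≤ l ^ (-(2 * a)) * (Γ2 * (exp (l * s) + exp (-(l * s)))) := by
          apply mul_le_mul_of_nonneg_left _ (rpow_nonneg hlpos.le _)
          exact mul_le_mul_of_nonneg_left h3 hΓpos.le
      _ = c * (exp (l * s) + exp (-(l * s))) := by rw [hc]; ring
  -- integrability over the product
  have hprodfun : ∀ t : ℝ, (fun x : Fin n → ℝ => exp (t * ∑ i, x i))
      = fun x : Fin n → ℝ => ∏ i, exp (t * x i) := by
    intro t; funext x; rw [Finset.mul_sum, exp_sum]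
  have hintE : ∀ t : ℝ, Integrable (fun x : Fin n → ℝ => exp (t * ∑ i, x i)) P := by
    intro t
    rw [hprodfun t, hP]
    exact integrable_pi_prod μ (hmgf t) n
  have hintE' : ∀ t : ℝ, ∫ x : Fin n → ℝ, exp (t * ∑ i, x i) ∂P = (∫ x, exp (t * x) ∂μ) ^ n := by
    intro t
    rw [hprodfun t, hP]
    exact integral_pi_prod μ (fun s => exp (t * s)) n
  have hnegfun : (fun x : Fin n → ℝ => exp (-(l * ∑ i, x i)))
      = fun x : Fin n → ℝ => exp ((-l) * ∑ i, x i) := by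
    funext x; rw [neg_mul]
  have hintRHS : Integrable
      (fun x : Fin n → ℝ => c * (exp (l * ∑ i, x i) + exp (-(l * ∑ i, x i)))) P := by
    refine Integrable.const_mul (Integrable.add (hintE l) ?_) c
    rw [hnegfun]; exact hintE (-l)
  have hmeasLHS : AEStronglyMeasurable (fun x : Fin n → ℝ => |∑ i, x i| ^ (2 * a)) P := by
    apply Continuous.aestronglyMeasurable
    apply Continuous.rpow_const
    · exact continuous_abs.comp (continuous_finset_sum _ fun i _ => continuous_apply i)
    · exact fun x => Or.inr (by linarith)
  have hintLHS : Integrable (fun x : Fin n → ℝ => |∑ i, x i| ^ (2 * a)) P := by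
    refine hintRHS.mono hmeasLHS (ae_of_all _ fun x => ?_)
    calc ‖|∑ i, x i| ^ (2 * a)‖ = |∑ i, x i| ^ (2 * a) := by
          rw [Real.norm_eq_abs]
          exact abs_of_nonneg (rpow_nonneg (abs_nonneg _) _)
      _ ≤ c * (exp (l * ∑ i, x i) + exp (-(l * ∑ i, x i))) := hpt _
      _ ≤ ‖c * (exp (l * ∑ i, x i) + exp (-(l * ∑ i, x i)))‖ :=
          (le_abs_self _).trans_eq (Real.norm_eq_abs _).symm
  -- moment generating function power bound
  have hKl : K * l ^ 2 * n = a := by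
    have hK0 : K ≠ 0 := hKpos.ne'
    have hn0 : (n:ℝ) ≠ 0 := hnR.ne'
    rw [hl2]
    field_simp
  have hMle : ∀ t : ℝ, |t| ≤ δ → t ^ 2 = l ^ 2 →
      (∫ x, exp (t * x) ∂μ) ^ n ≤ exp a := by
    intro t ht ht2
    have h0 : 0 ≤ ∫ x, exp (t * x) ∂μ := integral_nonneg fun x => (exp_pos _).le
    calc (∫ x, exp (t * x) ∂μ) ^ n ≤ (exp (K * t ^ 2)) ^ n :=
          pow_le_pow_left₀ h0 (hmgfb t ht) n
      _ = exp (K * t ^ 2 * n) := by rw [← exp_nat_mul]; ring_nf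
      _ = exp a := by rw [ht2, hKl]
  -- main estimate
  have main : ∫ x : Fin n → ℝ, |∑ i, x i| ^ (2 * a) ∂P ≤ c * (2 * exp a) := by
    calc ∫ x : Fin n → ℝ, |∑ i, x i| ^ (2 * a) ∂P
        ≤ ∫ x : Fin n → ℝ, c * (exp (l * ∑ i, x i) + exp (-(l * ∑ i, x i))) ∂P :=
          integral_mono hintLHS hintRHS fun x => hpt _
      _ = c * ((∫ x, exp (l * x) ∂μ) ^ n + (∫ x, exp ((-l) * x) ∂μ) ^ n) := by
          rw [integral_const_mul, integral_add (hintE l) (by rw [hnegfun]; exact hintE (-l)),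
            hintE' l]
          congr 2
          rw [hnegfun, hintE' (-l)]
      _ ≤ c * (exp a + exp a) := by
          apply mul_le_mul_of_nonneg_left _ hcpos.le
          have h1 := hMle l hlδ' rfl
          have h2 := hMle (-l) hlδ'' (by ring)
          linarith
      _ = c * (2 * exp a) := by ring
  refine le_trans main ?_
  -- final numeric bound
  have E1 : l ^ (-(2 * a)) = (K * n / a) ^ a := by
    have h1 : l ^ (-(2 * a)) = (l ^ 2) ^ (-a) := by
      rw [← rpow_natCast l 2, ← rpow_mul hlpos.le]
      norm_num
    rw [h1, hl2, rpow_neg (by positivity), ← inv_rpow (by positivity), inv_div]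
  have hq : (0:ℝ) < 5 * exp 1 / (8 * a) := div_pos (by positivity) (by linarith)
  have hKna : (0:ℝ) ≤ K * n / a := le_of_lt (div_pos (mul_pos hKpos hnR) hapos)
  have hVn : (0:ℝ) ≤ V * n := mul_nonneg hVpos.le hnR.le
  have E2 : (K * n / a) ^ a * exp a = V ^ a * (n:ℝ) ^ a * (2 ^ a * (5 * exp 1 / (8 * a)) ^ a) := by
    have h1 : (K * n / a) * exp 1 = (V * n) * (2 * (5 * exp 1 / (8 * a))) := by
      rw [hK]; field_simp; ring
    calc (K * n / a) ^ a * exp a = ((K * n / a) * exp 1) ^ a := by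
          rw [← exp_one_rpow a, ← mul_rpow hKna (exp_pos 1).le]
      _ = ((V * n) * (2 * (5 * exp 1 / (8 * a)))) ^ a := by rw [h1]
      _ = (V * n) ^ a * (2 * (5 * exp 1 / (8 * a))) ^ a :=
          mul_rpow hVn (mul_nonneg (by norm_num) hq.le)
      _ = V ^ a * (n:ℝ) ^ a * (2 ^ a * (5 * exp 1 / (8 * a)) ^ a) := by
          rw [mul_rpow hVpos.le hnR.le, mul_rpow (by norm_num : (0:ℝ) ≤ 2) hq.le]
  have hfin : c * (2 * exp a) = 2 * (Γ2 * (V ^ a * (n:ℝ) ^ a * 2 ^ a)) * (5 * exp 1 / (8 * a)) ^ a := by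
    calc c * (2 * exp a) = 2 * Γ2 * ((K * n / a) ^ a * exp a) := by rw [hc, E1]; ring
      _ = 2 * (Γ2 * (V ^ a * (n:ℝ) ^ a * 2 ^ a)) * (5 * exp 1 / (8 * a)) ^ a := by
          rw [E2]; ring
  rw [hfin]
  have hle2 := rpow_le_two hapos
  have hnn : 0 ≤ 2 * (Γ2 * (V ^ a * (n:ℝ) ^ a * 2 ^ a)) := by positivity
  calc 2 * (Γ2 * (V ^ a * (n:ℝ) ^ a * 2 ^ a)) * (5 * exp 1 / (8 * a)) ^ a
      ≤ 2 * (Γ2 * (V ^ a * (n:ℝ) ^ a * 2 ^ a)) * 2 := mul_le_mul_of_nonneg_left hle2 hnn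
    _ = 4 * 2 ^ a * Γ2 * V ^ a * (n:ℝ) ^ a := by ring
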